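/- Let X be a set equipped with a partial order ≤ and let n ≥ 1. For a nonempty proper subset I of the index set {0,…,n}, let U_I = {x ∈ X^{n+1} : for all i ∈ I and all j ∉ I, ¬(x_i ≤ x_j)}. Then the union of the sets U_I over all nonempty proper subsets I of {0,…,n} is exactly the set of tuples x ∈ X^{n+1} that are not constant, i.e. X^{n+1} minus the diagonal {x : x_0 = x_1 = ⋯ = x_n}. -/

import Mathlib

/-- The sets `U_I = {x | ∀ i ∈ I, ∀ j ∉ I, ¬ xᵢ ≤ xⱼ}`, for `I` a nonempty proper subset of
the index set, cover exactly the complement of the diagonal in `X^(n+1)`. -/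
theorem causal_cover_of_complement_of_diagonal
    {X : Type*} [PartialOrder X] (n : ℕ) (hn : 1 ≤ n) :
    (⋃ I ∈ {I : Set (Fin (n + 1)) | I.Nonempty ∧ I ≠ Set.univ},
        {x : Fin (n + 1) → X | ∀ i ∈ I, ∀ j ∉ I, ¬ x i ≤ x j}) =
      {x : Fin (n + 1) → X | ∃ i j : Fin (n + 1), x i ≠ x j} := by
  classical
  ext x
  simp only [Set.mem_iUnion, Set.mem_setOf_eq, exists_prop]
  constructor
  · rintro ⟨I, ⟨⟨i, hi⟩, hproper⟩, hx⟩
    obtain ⟨j, hj⟩ := Set.ne_univ_iff_exists_notMem I |>.mp hproper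
    exact ⟨i, j, fun h => hx i hi j hj (le_of_eq h)⟩
  · rintro ⟨a, b, hab⟩
    obtain ⟨c, hc, hmax⟩ := (Finset.univ.image x).exists_maximal
      (by simp [Finset.image_nonempty])
    refine ⟨{i | x i = c}, ⟨?_, ?_⟩, ?_⟩
    · obtain ⟨m, _, hm⟩ := Finset.mem_image.mp hc
      exact ⟨m, hm⟩
    · intro h
      have ha : x a = c := Set.eq_univ_iff_forall.mp h a
      have hb : x b = c := Set.eq_univ_iff_forall.mp h b
      exact hab (ha.trans hb.symm)
    · intro i hi j hj hle
      rw [Set.mem_setOf_eq] at hi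
      rcases lt_or_eq_of_le hle with hlt | heq
      · exact lt_irrefl c (lt_of_lt_of_le (show c < x j from hi ▸ hlt) (hmax (Finset.mem_image_of_mem x (Finset.mem_univ j)) (show c < x j from hi ▸ hlt).le))
      · exact hj (hi ▸ heq.symm : x j = c)
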